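/- Let q be an odd prime power and let f₁, f₂ be distinct monic quadratic polynomials over 𝔽_q. If f_{i₁} ∘ ⋯ ∘ f_{i_n} = f_{j₁} ∘ ⋯ ∘ f_{j_m} with all indices in {1,2}, then m = n and i_h = j_h for every index h. -/

import Mathlib

open Polynomial

private lemma monic_sub_C {F : Type*} [Field F] {p : F[X]} (hp : p.Monic)
    (hpos : 0 < p.natDegree) (a : F) : (p - C a).Monic := by
  rw [sub_eq_add_neg]
  refine hp.add_of_left ?_
  have h0 : (0 : WithBot ℕ) < p.degree := natDegree_pos_iff_degree_pos.mp hpos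
  calc (-C a).degree ≤ 0 := by rw [degree_neg]; exact degree_C_le
  _ < p.degree := h0

private lemma sq_aux {F : Type*} [Field F] (two : (2:F) ≠ 0)
    {u v : F[X]} (hu : u.Monic) (hv : v.Monic) (hd : u.natDegree = v.natDegree)
    (hpos : 0 < v.natDegree) {s : F} (h : u ^ 2 = v ^ 2 + C s) : u = v ∧ s = 0 := by
  have key : (u + v) * (u - v) = C s := by
    have : u ^ 2 - v ^ 2 = C s := by linear_combination h
    linear_combination this
  have hsum_ne : u + v ≠ 0 := by
    intro h0
    have hc : (u + v).coeff v.natDegree = 2 := by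
      have h1 : u.coeff v.natDegree = 1 := by rw [← hd]; exact hu.coeff_natDegree
      have h2 : v.coeff v.natDegree = 1 := hv.coeff_natDegree
      rw [coeff_add, h1, h2]; norm_num
    rw [h0] at hc
    simp at hc
    exact two hc.symm
  have hsum_deg : v.natDegree ≤ (u + v).natDegree := by
    apply le_natDegree_of_ne_zero
    have h1 : u.coeff v.natDegree = 1 := by rw [← hd]; exact hu.coeff_natDegree
    have h2 : v.coeff v.natDegree = 1 := hv.coeff_natDegree
    rw [coeff_add, h1, h2]
    intro hcon
    apply two
    rw [← hcon]; norm_num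
  by_cases huv : u - v = 0
  · have huv' : u = v := sub_eq_zero.mp huv
    constructor
    · exact huv'
    · have : C s = 0 := by rw [← key, huv, mul_zero]
      exact_mod_cast (C_eq_zero).mp this
  · exfalso
    have hdeg := congrArg natDegree key
    rw [natDegree_mul hsum_ne huv, natDegree_C] at hdeg
    omega

private lemma quad_repr {F : Type*} [Field F] (two : (2:F) ≠ 0)
    {f : F[X]} (hm : f.Monic) (hd : f.natDegree = 2) :
    ∃ b c, f = (X - C b) ^ 2 + C c := by
  refine ⟨-f.coeff 1 / 2, f.coeff 0 - (-f.coeff 1 / 2) ^ 2, ?_⟩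
  have hform : f = X ^ 2 + C (f.coeff 1) * X + C (f.coeff 0) := by
    ext n
    match n with
    | 0 => simp
    | 1 => simp
    | 2 =>
      have : f.coeff 2 = 1 := by rw [← hd]; exact hm.coeff_natDegree
      simp [this, coeff_C]
    | (n+3) =>
      have : f.coeff (n+3) = 0 := coeff_eq_zero_of_natDegree_lt (by omega)
      simp [this, coeff_C, coeff_X]
  have key : ∀ (a₁ a₀ b c : F), a₁ = -2 * b → a₀ = b ^ 2 + c →
      (X : F[X]) ^ 2 + C a₁ * X + C a₀ = (X - C b) ^ 2 + C c := by
    intro a₁ a₀ b c h1 h2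
    subst h1 h2
    simp only [map_mul, map_neg, map_ofNat, map_add, map_pow]
    ring
  conv_lhs => rw [hform]
  exact key _ _ _ _ (by field_simp) (by ring)

private lemma monic_quad {F : Type*} [Field F] (b c : F) :
    ((X - C b) ^ 2 + C c).Monic ∧ ((X - C b) ^ 2 + C c).natDegree = 2 := by
  have hm : ((X - C b) ^ 2).Monic := (monic_X_sub_C b).pow 2
  have hdeg : ((X - C b) ^ 2).natDegree = 2 := by
    rw [natDegree_pow, natDegree_X_sub_C]
  constructor
  · refine hm.add_of_left ?_
    rw [degree_eq_natDegree hm.ne_zero, hdeg]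
    exact lt_of_le_of_lt degree_C_le (by exact_mod_cast Nat.zero_lt_two)
  · rw [natDegree_add_C, hdeg]

private lemma foldr_facts {F : Type*} [Field F] :
    ∀ (l : List F[X]), (∀ g ∈ l, g.Monic ∧ g.natDegree = 2) →
      (List.foldr (fun a b => a.comp b) X l).Monic ∧
      (List.foldr (fun a b => a.comp b) X l).natDegree = 2 ^ l.length := by
  intro l
  induction l with
  | nil => intro _; exact ⟨monic_X, by simp⟩
  | cons h t ih =>
    intro hmem
    obtain ⟨ihm, ihd⟩ := ih (fun g hg => hmem g (List.mem_cons_of_mem _ hg))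
    obtain ⟨hm, hd⟩ := hmem h List.mem_cons_self
    constructor
    · exact hm.comp ihm (by rw [ihd]; positivity)
    · rw [List.foldr_cons, natDegree_comp, hd, ihd, List.length_cons]
      ring

private lemma step {F : Type*} [Field F] (two : (2:F) ≠ 0) (b c β γ t : F)
    (g G : F[X]) (hg : g.Monic) (hG : G.Monic) (hd : g.natDegree = G.natDegree)
    (hpos : 0 < G.natDegree)
    (h : ((X - C b) ^ 2 + C c).comp g = ((X - C β) ^ 2 + C γ).comp G + C t) :
    g = G + C (b - β) ∧ t = c - γ := by
  simp only [add_comp, sub_comp, pow_comp, X_comp, C_comp] at h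
  have h' : (g - C b) ^ 2 = (G - C β) ^ 2 + C (γ + t - c) := by
    have : C (γ + t - c) = C γ + C t - C c := by rw [map_sub, map_add]
    rw [this]; linear_combination h
  have hgpos : 0 < g.natDegree := hd ▸ hpos
  obtain ⟨h1, h2⟩ := sq_aux two (monic_sub_C hg hgpos b) (monic_sub_C hG hpos β)
    (by rw [natDegree_sub_C, natDegree_sub_C, hd]) (by rw [natDegree_sub_C]; exact hpos) h'
  constructor
  · have : C (b - β) = C b - C β := map_sub _ _ _
    rw [this]; linear_combination h1
  · linear_combination h2

section Ind

/-- Common part: from the cons-cons equation derive the tail equation and head data. -/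
private lemma cons_step {F : Type*} [Field F] (two : (2:F) ≠ 0) (f₁ f₂ : F[X])
    (b₁ c₁ b₂ c₂ : F) (hf₁ : f₁ = (X - C b₁) ^ 2 + C c₁) (hf₂ : f₂ = (X - C b₂) ^ 2 + C c₂)
    (h k : F[X]) (l₁' l₂' : List F[X])
    (hh : h = f₁ ∨ h = f₂) (hk : k = f₁ ∨ k = f₂)
    (hm₁ : ∀ g ∈ l₁', g = f₁ ∨ g = f₂) (hm₂ : ∀ g ∈ l₂', g = f₁ ∨ g = f₂)
    (t : F)
    (heq : h.comp (List.foldr (fun a b => a.comp b) X l₁') =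
      k.comp (List.foldr (fun a b => a.comp b) X l₂') + C t) :
    ∃ b c β γ : F,
      ((b = b₁ ∧ c = c₁ ∧ h = f₁) ∨ (b = b₂ ∧ c = c₂ ∧ h = f₂)) ∧
      ((β = b₁ ∧ γ = c₁ ∧ k = f₁) ∨ (β = b₂ ∧ γ = c₂ ∧ k = f₂)) ∧
      List.foldr (fun a b => a.comp b) X l₁' =
        List.foldr (fun a b => a.comp b) X l₂' + C (b - β) ∧
      t = c - γ := by
  have memfacts : ∀ (l : List F[X]), (∀ g ∈ l, g = f₁ ∨ g = f₂) →
      (∀ g ∈ l, g.Monic ∧ g.natDegree = 2) := by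
    intro l hl g hg
    rcases hl g hg with h' | h'
    · rw [h', hf₁]; exact monic_quad b₁ c₁
    · rw [h', hf₂]; exact monic_quad b₂ c₂
  obtain ⟨hg1m, hg1d⟩ := foldr_facts l₁' (memfacts l₁' hm₁)
  obtain ⟨hg2m, hg2d⟩ := foldr_facts l₂' (memfacts l₂' hm₂)
  set g := List.foldr (fun a b => a.comp b) X l₁' with hgdef
  set G := List.foldr (fun a b => a.comp b) X l₂' with hGdef
  obtain ⟨b, c, hbc⟩ : ∃ b c, ((b = b₁ ∧ c = c₁ ∧ h = f₁) ∨ (b = b₂ ∧ c = c₂ ∧ h = f₂)) := by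
    rcases hh with h' | h'
    · exact ⟨b₁, c₁, Or.inl ⟨rfl, rfl, h'⟩⟩
    · exact ⟨b₂, c₂, Or.inr ⟨rfl, rfl, h'⟩⟩
  obtain ⟨β, γ, hβγ⟩ : ∃ β γ, ((β = b₁ ∧ γ = c₁ ∧ k = f₁) ∨ (β = b₂ ∧ γ = c₂ ∧ k = f₂)) := by
    rcases hk with h' | h'
    · exact ⟨b₁, c₁, Or.inl ⟨rfl, rfl, h'⟩⟩
    · exact ⟨b₂, c₂, Or.inr ⟨rfl, rfl, h'⟩⟩
  have hhrep : h = (X - C b) ^ 2 + C c := by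
    rcases hbc with ⟨rfl, rfl, h'⟩ | ⟨rfl, rfl, h'⟩
    · rw [h', hf₁]
    · rw [h', hf₂]
  have hkrep : k = (X - C β) ^ 2 + C γ := by
    rcases hβγ with ⟨rfl, rfl, h'⟩ | ⟨rfl, rfl, h'⟩
    · rw [h', hf₁]
    · rw [h', hf₂]
  rw [hhrep, hkrep] at heq
  -- degree equality
  have hmq1 := monic_quad b c
  have hmq2 := monic_quad β γ
  have hdeq : g.natDegree = G.natDegree := by
    have := congrArg natDegree heq
    rw [natDegree_add_C, natDegree_comp, natDegree_comp, hmq1.2, hmq2.2] at this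
    omega
  have hGpos : 0 < G.natDegree := by rw [hg2d]; positivity
  obtain ⟨h1, h2⟩ := step two b c β γ t g G hg1m hg2m hdeq hGpos heq
  exact ⟨b, c, β, γ, hbc, hβγ, h1, h2⟩

/-- Degree mismatch: `X` cannot equal a composition headed by a quadratic. -/
private lemma nil_cons_absurd {F : Type*} [Field F] (f₁ f₂ : F[X])
    (b₁ c₁ b₂ c₂ : F) (hf₁ : f₁ = (X - C b₁) ^ 2 + C c₁) (hf₂ : f₂ = (X - C b₂) ^ 2 + C c₂)
    (k : F[X]) (l₂' : List F[X])
    (hk : k = f₁ ∨ k = f₂) (hm₂ : ∀ g ∈ l₂', g = f₁ ∨ g = f₂) (t : F)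
    (heq : (X : F[X]) = k.comp (List.foldr (fun a b => a.comp b) X l₂') + C t) :
    False := by
  have memfacts : (∀ g ∈ l₂', g.Monic ∧ g.natDegree = 2) := by
    intro g hg
    rcases hm₂ g hg with h' | h'
    · rw [h', hf₁]; exact monic_quad b₁ c₁
    · rw [h', hf₂]; exact monic_quad b₂ c₂
  obtain ⟨hGm, hGd⟩ := foldr_facts l₂' memfacts
  have hkd : k.natDegree = 2 := by
    rcases hk with h' | h'
    · rw [h', hf₁]; exact (monic_quad b₁ c₁).2
    · rw [h', hf₂]; exact (monic_quad b₂ c₂).2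
  have := congrArg natDegree heq
  rw [natDegree_X, natDegree_add_C, natDegree_comp, hkd, hGd] at this
  have : (1:ℕ) = 2 * 2 ^ l₂'.length := this
  have hp : 1 ≤ 2 ^ l₂'.length := Nat.one_le_two_pow
  omega

private lemma indA {F : Type*} [Field F] (two : (2:F) ≠ 0) (f₁ f₂ : F[X]) (hne : f₁ ≠ f₂)
    (b₁ c₁ b₂ c₂ : F) (hf₁ : f₁ = (X - C b₁) ^ 2 + C c₁) (hf₂ : f₂ = (X - C b₂) ^ 2 + C c₂)
    (hcc : c₁ = c₂) :
    ∀ (l₁ l₂ : List F[X]), (∀ g ∈ l₁, g = f₁ ∨ g = f₂) → (∀ g ∈ l₂, g = f₁ ∨ g = f₂) →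
      ∀ t : F, List.foldr (fun a b => a.comp b) X l₁ =
        List.foldr (fun a b => a.comp b) X l₂ + C t → l₁ = l₂ ∧ t = 0 := by
  intro l₁
  induction l₁ with
  | nil =>
    intro l₂ _ hl₂ t heq
    cases l₂ with
    | nil =>
      simp only [List.foldr_nil] at heq
      have : C t = 0 := by linear_combination -heq
      exact ⟨rfl, by exact_mod_cast (C_eq_zero).mp this⟩
    | cons k l₂' =>
      exact absurd heq (fun heq => nil_cons_absurd f₁ f₂ b₁ c₁ b₂ c₂ hf₁ hf₂ k l₂'
        (hl₂ k List.mem_cons_self) (fun g hg => hl₂ g (List.mem_cons_of_mem _ hg)) t heq)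
  | cons h l₁' ih =>
    intro l₂ hl₁ hl₂ t heq
    cases l₂ with
    | nil =>
      exfalso
      simp only [List.foldr_cons, List.foldr_nil] at heq
      have heq' : (X : F[X]) = h.comp (List.foldr (fun a b => a.comp b) X l₁') + C (-t) := by
        rw [map_neg]; linear_combination -heq
      exact nil_cons_absurd f₁ f₂ b₁ c₁ b₂ c₂ hf₁ hf₂ h l₁'
        (hl₁ h List.mem_cons_self) (fun g hg => hl₁ g (List.mem_cons_of_mem _ hg)) (-t) heq'
    | cons k l₂' =>
      simp only [List.foldr_cons] at heq
      obtain ⟨b, c, β, γ, hbc, hβγ, htail, ht⟩ :=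
        cons_step two f₁ f₂ b₁ c₁ b₂ c₂ hf₁ hf₂ h k l₁' l₂'
          (hl₁ h List.mem_cons_self) (hl₂ k List.mem_cons_self)
          (fun g hg => hl₁ g (List.mem_cons_of_mem _ hg))
          (fun g hg => hl₂ g (List.mem_cons_of_mem _ hg)) t heq
      obtain ⟨hteq, hb0⟩ := ih l₂' (fun g hg => hl₁ g (List.mem_cons_of_mem _ hg))
        (fun g hg => hl₂ g (List.mem_cons_of_mem _ hg)) (b - β) htail
      have hbβ : b = β := by linear_combination hb0
      rcases hbc with ⟨rfl, rfl, hh⟩ | ⟨rfl, rfl, hh⟩ <;>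
        rcases hβγ with ⟨hβ, hγ, hk⟩ | ⟨hβ, hγ, hk⟩
      · subst hβ hγ; exact ⟨by rw [hteq, hh, hk], by rw [ht]; ring⟩
      · exfalso; apply hne; rw [hf₁, hf₂, hbβ.trans hβ, hcc]
      · exfalso; apply hne; rw [hf₁, hf₂, (hbβ.trans hβ).symm, hcc]
      · subst hβ hγ; exact ⟨by rw [hteq, hh, hk], by rw [ht]; ring⟩

private lemma indB {F : Type*} [Field F] (two : (2:F) ≠ 0) (f₁ f₂ : F[X])
    (b₁ c₁ b₂ c₂ : F) (hf₁ : f₁ = (X - C b₁) ^ 2 + C c₁) (hf₂ : f₂ = (X - C b₂) ^ 2 + C c₂)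
    (hcc : c₁ ≠ c₂) :
    ∀ (l₁ l₂ : List F[X]), (∀ g ∈ l₁, g = f₁ ∨ g = f₂) → (∀ g ∈ l₂, g = f₁ ∨ g = f₂) →
      List.foldr (fun a b => a.comp b) X l₁ =
        List.foldr (fun a b => a.comp b) X l₂ + C (0:F) → l₁ = l₂ := by
  intro l₁
  induction l₁ with
  | nil =>
    intro l₂ _ hl₂ heq
    cases l₂ with
    | nil => rfl
    | cons k l₂' =>
      exact absurd heq (fun heq => nil_cons_absurd f₁ f₂ b₁ c₁ b₂ c₂ hf₁ hf₂ k l₂'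
        (hl₂ k List.mem_cons_self) (fun g hg => hl₂ g (List.mem_cons_of_mem _ hg)) 0 heq)
  | cons h l₁' ih =>
    intro l₂ hl₁ hl₂ heq
    cases l₂ with
    | nil =>
      exfalso
      simp only [List.foldr_cons, List.foldr_nil] at heq
      have heq' : (X : F[X]) = h.comp (List.foldr (fun a b => a.comp b) X l₁') + C (0:F) := by
        rw [map_zero] at heq ⊢; linear_combination -heq
      exact nil_cons_absurd f₁ f₂ b₁ c₁ b₂ c₂ hf₁ hf₂ h l₁'
        (hl₁ h List.mem_cons_self) (fun g hg => hl₁ g (List.mem_cons_of_mem _ hg)) 0 heq'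
    | cons k l₂' =>
      simp only [List.foldr_cons] at heq
      obtain ⟨b, c, β, γ, hbc, hβγ, htail, ht⟩ :=
        cons_step two f₁ f₂ b₁ c₁ b₂ c₂ hf₁ hf₂ h k l₁' l₂'
          (hl₁ h List.mem_cons_self) (hl₂ k List.mem_cons_self)
          (fun g hg => hl₁ g (List.mem_cons_of_mem _ hg))
          (fun g hg => hl₂ g (List.mem_cons_of_mem _ hg)) 0 heq
      have hcγ : c = γ := by linear_combination -ht
      -- mixed cases contradict hcc; same cases give b = β
      have hsame : (b = β) ∧ h = k := by
        rcases hbc with ⟨rfl, rfl, hh⟩ | ⟨rfl, rfl, hh⟩ <;>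
          rcases hβγ with ⟨hβ, hγ, hk⟩ | ⟨hβ, hγ, hk⟩
        · subst hβ hγ; exact ⟨rfl, by rw [hh, hk]⟩
        · exact absurd (hcγ.trans hγ) hcc
        · exact absurd (hcγ.trans hγ).symm hcc
        · subst hβ hγ; exact ⟨rfl, by rw [hh, hk]⟩
      obtain ⟨hbβ, hhk⟩ := hsame
      have htail' : List.foldr (fun a b => a.comp b) X l₁' =
          List.foldr (fun a b => a.comp b) X l₂' + C (0:F) := by
        rwa [hbβ, sub_self] at htail
      have := ih l₂' (fun g hg => hl₁ g (List.mem_cons_of_mem _ hg))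
        (fun g hg => hl₂ g (List.mem_cons_of_mem _ hg)) htail'
      rw [this, hhk]

end Ind

theorem composition_of_two_quadratics_unique (F : Type*) [Field F] [Fintype F]
    (hodd : Odd (Fintype.card F))
    (f₁ f₂ : F[X]) (hne : f₁ ≠ f₂)
    (h₁m : f₁.Monic) (h₁d : f₁.natDegree = 2)
    (h₂m : f₂.Monic) (h₂d : f₂.natDegree = 2)
    (l₁ l₂ : List F[X])
    (hl₁ : ∀ g ∈ l₁, g = f₁ ∨ g = f₂) (hl₂ : ∀ g ∈ l₂, g = f₁ ∨ g = f₂)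
    (heq : l₁.foldr (fun a b => a.comp b) X = l₂.foldr (fun a b => a.comp b) X) :
    l₁ = l₂ := by
  have hchar : ringChar F ≠ 2 := by
    intro h
    have h1 := FiniteField.even_card_of_char_two h
    have h2 := Nat.odd_iff.mp hodd
    omega
  have two : (2:F) ≠ 0 := Ring.two_ne_zero hchar
  obtain ⟨b₁, c₁, hf₁⟩ := quad_repr two h₁m h₁d
  obtain ⟨b₂, c₂, hf₂⟩ := quad_repr two h₂m h₂d
  have heq' : l₁.foldr (fun a b => a.comp b) X = l₂.foldr (fun a b => a.comp b) X + C (0:F) := by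
    rw [map_zero, add_zero]; exact heq
  by_cases hcc : c₁ = c₂
  · exact (indA two f₁ f₂ hne b₁ c₁ b₂ c₂ hf₁ hf₂ hcc l₁ l₂ hl₁ hl₂ 0 heq').1
  · exact indB two f₁ f₂ b₁ c₁ b₂ c₂ hf₁ hf₂ hcc l₁ l₂ hl₁ hl₂ heq'
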